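/- Under the setting of the previous statement, if additionally ℓ is K-smooth with min ℓ = 0, then ‖D⁺ − D‖_F ≤ 2K η² (σ_max(W₁)² + σ_max(W₂)²) ℓ(W₁W₂ᵀ). -/

import Mathlib

open Matrix

/-- Frobenius norm of a real matrix. -/
noncomputable def fro {a b : ℕ} (A : Matrix (Fin a) (Fin b) ℝ) : ℝ :=
  Real.sqrt (∑ i, ∑ j, (A i j) ^ 2)

/-- Frobenius (trace) inner product of two real matrices. -/
noncomputable def ip {a b : ℕ} (A B : Matrix (Fin a) (Fin b) ℝ) : ℝ :=
  ∑ i, ∑ j, A i j * B i j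

/-- Square of the largest singular value of `A`: largest eigenvalue of `Aᴴ * A`. -/
noncomputable def smaxSq {a b : ℕ} (A : Matrix (Fin a) (Fin b) ℝ) : ℝ :=
  ⨆ i, (Matrix.isHermitian_conjTranspose_mul_self A).eigenvalues i

/-- Square of the smallest singular value of `A` (as the smallest eigenvalue of `Aᴴ * A`;
zero when `A` is rank-deficient as a map out of its column space). -/
noncomputable def sminSq {a b : ℕ} (A : Matrix (Fin a) (Fin b) ℝ) : ℝ :=
  ⨅ i, (Matrix.isHermitian_conjTranspose_mul_self A).eigenvalues i

/-- Square of the largest singular value via `A * Aᴴ`. -/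
noncomputable def smaxSqR {a b : ℕ} (A : Matrix (Fin a) (Fin b) ℝ) : ℝ :=
  ⨆ i, (Matrix.isHermitian_mul_conjTranspose_self A).eigenvalues i

/-- Square of the smallest singular value via `A * Aᴴ` (the `min(a,b)`-th singular value
when `a ≤ b`). -/
noncomputable def sminSqR {a b : ℕ} (A : Matrix (Fin a) (Fin b) ℝ) : ℝ :=
  ⨅ i, (Matrix.isHermitian_mul_conjTranspose_self A).eigenvalues i

/-- Largest singular value. -/
noncomputable def smax {a b : ℕ} (A : Matrix (Fin a) (Fin b) ℝ) : ℝ :=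
  Real.sqrt (smaxSq A)

section Aux
attribute [local instance] Matrix.frobeniusSeminormedAddCommGroup

variable {a b c : ℕ}

lemma smaxSq_nonneg (A : Matrix (Fin a) (Fin b) ℝ) : 0 ≤ smaxSq A :=
  Real.iSup_nonneg fun i => Matrix.eigenvalues_conjTranspose_mul_self_nonneg A i

lemma eig_le_smaxSq (A : Matrix (Fin a) (Fin b) ℝ) (i : Fin b) :
    (Matrix.isHermitian_conjTranspose_mul_self A).eigenvalues i ≤ smaxSq A :=
  le_ciSup (Set.Finite.bddAbove (Set.finite_range _)) i

lemma dot_self_nonneg (x : Fin a → ℝ) : 0 ≤ x ⬝ᵥ x :=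
  Finset.sum_nonneg fun i _ => mul_self_nonneg _

lemma quad_le (A : Matrix (Fin a) (Fin b) ℝ) (x : Fin b → ℝ) :
    (A *ᵥ x) ⬝ᵥ (A *ᵥ x) ≤ smaxSq A * (x ⬝ᵥ x) := by
  have hH := Matrix.isHermitian_conjTranspose_mul_self A
  set U : Matrix (Fin b) (Fin b) ℝ := (hH.eigenvectorUnitary : Matrix (Fin b) (Fin b) ℝ) with hU
  set lam := hH.eigenvalues with hlam
  set y : Fin b → ℝ := star U *ᵥ x with hy
  have hAH : Aᴴ = Aᵀ := by ext i j; simp [Matrix.conjTranspose_apply]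
  have key : (A *ᵥ x) ⬝ᵥ (A *ᵥ x) = x ⬝ᵥ ((Aᴴ * A) *ᵥ x) := by
    rw [hAH, ← mulVec_mulVec, dotProduct_mulVec x, ← mulVec_transpose, transpose_transpose]
  have hsU : star U = Uᵀ := by
    rw [Matrix.star_eq_conjTranspose, Matrix.conjTranspose_eq_transpose_of_trivial]
  have expand : x ⬝ᵥ ((Aᴴ * A) *ᵥ x) = ∑ i, lam i * (y i)^2 := by
    conv_lhs => rw [hH.spectral_theorem]
    rw [Unitary.conjStarAlgAut_apply, ← mulVec_mulVec, ← mulVec_mulVec, dotProduct_mulVec x, ← mulVec_transpose, ← hsU, ← hy]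
    simp only [dotProduct, mulVec_diagonal, Function.comp]
    refine Finset.sum_congr rfl fun i _ => ?_
    simp only [RCLike.ofReal_real_eq_id, id]
    ring
  have hyy : x ⬝ᵥ x = ∑ i, (y i)^2 := by
    have h1 : y ⬝ᵥ y = x ⬝ᵥ ((U * star U) *ᵥ x) := by
      rw [hy, ← mulVec_mulVec, dotProduct_mulVec x, ← mulVec_transpose, ← hsU]
    have h2 : U * star U = 1 := (Matrix.mem_unitaryGroup_iff).mp (hH.eigenvectorUnitary).2
    rw [h2, one_mulVec] at h1
    rw [← h1]; simp [dotProduct, pow_two]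
  rw [key, expand, hyy, Finset.mul_sum]
  exact Finset.sum_le_sum fun i _ =>
    mul_le_mul_of_nonneg_right (eig_le_smaxSq A i) (sq_nonneg _)

lemma quadT_le (A : Matrix (Fin a) (Fin b) ℝ) (y : Fin a → ℝ) :
    (Aᵀ *ᵥ y) ⬝ᵥ (Aᵀ *ᵥ y) ≤ smaxSq A * (y ⬝ᵥ y) := by
  set r := Aᵀ *ᵥ y with hr
  have h1 : r ⬝ᵥ r = y ⬝ᵥ (A *ᵥ r) := by
    rw [dotProduct_mulVec y, ← mulVec_transpose, ← hr]
  have hcs : (y ⬝ᵥ (A *ᵥ r)) ^ 2 ≤ (y ⬝ᵥ y) * ((A *ᵥ r) ⬝ᵥ (A *ᵥ r)) := by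
    have := Finset.sum_mul_sq_le_sq_mul_sq Finset.univ y (A *ᵥ r)
    simpa [dotProduct, pow_two] using this
  have h2 : (A *ᵥ r) ⬝ᵥ (A *ᵥ r) ≤ smaxSq A * (r ⬝ᵥ r) := quad_le A r
  have hy0 : 0 ≤ y ⬝ᵥ y := dot_self_nonneg y
  have hr0 : 0 ≤ r ⬝ᵥ r := dot_self_nonneg r
  have hs0 : 0 ≤ smaxSq A := smaxSq_nonneg A
  rcases eq_or_lt_of_le hr0 with h0 | h0
  · rw [← h0]; positivity
  · nlinarith [hcs, h2, h1]

lemma fro_nonneg (A : Matrix (Fin a) (Fin b) ℝ) : 0 ≤ fro A := Real.sqrt_nonneg _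

lemma fro_sq (A : Matrix (Fin a) (Fin b) ℝ) : fro A ^ 2 = ∑ i, ∑ j, (A i j) ^ 2 :=
  Real.sq_sqrt (Finset.sum_nonneg fun i _ => Finset.sum_nonneg fun j _ => sq_nonneg _)

lemma fro_eq_norm (A : Matrix (Fin a) (Fin b) ℝ) : fro A = ‖A‖ := by
  rw [Matrix.frobenius_norm_def, fro, Real.sqrt_eq_rpow]
  congr 1
  refine Finset.sum_congr rfl fun i _ => Finset.sum_congr rfl fun j _ => ?_
  rw [show ((2:ℝ)) = ((2:ℕ):ℝ) by norm_num, Real.rpow_natCast, Real.norm_eq_abs, sq_abs]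

lemma fro_sub_le (A B : Matrix (Fin a) (Fin b) ℝ) : fro (A - B) ≤ fro A + fro B := by
  simp only [fro_eq_norm]; exact norm_sub_le A B

lemma fro_mul_le (A : Matrix (Fin a) (Fin b) ℝ) (B : Matrix (Fin b) (Fin c) ℝ) :
    fro (A * B) ≤ fro A * fro B := by
  simp only [fro_eq_norm]; exact Matrix.frobenius_norm_mul A B

lemma fro_transpose (A : Matrix (Fin a) (Fin b) ℝ) : fro Aᵀ = fro A := by
  simp only [fro_eq_norm]; exact Matrix.frobenius_norm_transpose A

lemma fro_smul (c : ℝ) (hc : 0 ≤ c) (A : Matrix (Fin a) (Fin b) ℝ) :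
    fro (c • A) = c * fro A := by
  simp only [fro, Matrix.smul_apply, smul_eq_mul, mul_pow, ← Finset.mul_sum]
  rw [Real.sqrt_mul (sq_nonneg c), Real.sqrt_sq hc]

lemma fro_mul_right_sq (B : Matrix (Fin a) (Fin b) ℝ) (A : Matrix (Fin b) (Fin c) ℝ) :
    fro (B * A) ^ 2 ≤ smaxSq A * fro B ^ 2 := by
  rw [fro_sq, fro_sq]
  have step : ∀ i : Fin a, ∑ j, ((B * A) i j) ^ 2 = (Aᵀ *ᵥ B i) ⬝ᵥ (Aᵀ *ᵥ B i) := by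
    intro i
    simp only [dotProduct, Matrix.mul_apply, mulVec, dotProduct, transpose_apply, pow_two]
    refine Finset.sum_congr rfl fun j _ => ?_
    congr 1 <;> exact Finset.sum_congr rfl fun k _ => mul_comm _ _
  calc ∑ i, ∑ j, ((B * A) i j) ^ 2 = ∑ i, (Aᵀ *ᵥ B i) ⬝ᵥ (Aᵀ *ᵥ B i) := by
        exact Finset.sum_congr rfl fun i _ => step i
    _ ≤ ∑ i, smaxSq A * (B i ⬝ᵥ B i) := Finset.sum_le_sum fun i _ => quadT_le A (B i)
    _ = smaxSq A * ∑ i, ∑ j, (B i j) ^ 2 := by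
        rw [← Finset.mul_sum]
        congr 1
        exact Finset.sum_congr rfl fun i _ => by simp [dotProduct, pow_two]

lemma ip_self (A : Matrix (Fin a) (Fin b) ℝ) : ip A A = fro A ^ 2 := by
  rw [fro_sq]; simp [ip, pow_two]

lemma fro_G_sq_le {n m : ℕ} (K : ℝ) (hK : 0 < K)
    (ℓ : Matrix (Fin n) (Fin m) ℝ → ℝ)
    (g : Matrix (Fin n) (Fin m) ℝ → Matrix (Fin n) (Fin m) ℝ)
    (hsmooth : ∀ U V, ℓ U ≤ ℓ V + ip (g V) (U - V) + K / 2 * fro (U - V) ^ 2)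
    (hnonneg : ∀ W, 0 ≤ ℓ W) (V : Matrix (Fin n) (Fin m) ℝ) :
    fro (g V) ^ 2 ≤ 2 * K * ℓ V := by
  have h := hsmooth (V - K⁻¹ • g V) V
  have hUV : V - K⁻¹ • g V - V = -(K⁻¹ • g V) := by abel
  rw [hUV] at h
  have hip : ip (g V) (-(K⁻¹ • g V)) = -(K⁻¹ * fro (g V) ^ 2) := by
    rw [← ip_self]
    simp only [ip, Matrix.neg_apply, Matrix.smul_apply, smul_eq_mul, Finset.mul_sum, mul_neg,
      ← Finset.sum_neg_distrib]
    exact Finset.sum_congr rfl fun i _ => Finset.sum_congr rfl fun j _ => by ring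
  have fro_neg : ∀ (X : Matrix (Fin n) (Fin m) ℝ), fro (-X) = fro X := by
    intro X; simp [fro, Matrix.neg_apply]
  have hfro : fro (-(K⁻¹ • g V)) ^ 2 = K⁻¹ ^ 2 * fro (g V) ^ 2 := by
    rw [fro_neg, fro_smul K⁻¹ (by positivity) (g V), mul_pow]
  have h0 := hnonneg (V - K⁻¹ • g V)
  rw [hip, hfro] at h
  have hK2 : (0:ℝ) < K⁻¹ := by positivity
  have key : K / 2 * (K⁻¹ ^ 2 * fro (g V) ^ 2) = K⁻¹ / 2 * fro (g V) ^ 2 := by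
    field_simp
  rw [key] at h
  have h3 : K⁻¹ / 2 * fro (g V) ^ 2 ≤ ℓ V := by linarith
  calc fro (g V) ^ 2 = 2 * K * (K⁻¹ / 2 * fro (g V) ^ 2) := by field_simp
    _ ≤ 2 * K * ℓ V := by nlinarith
end Aux

/-- If additionally `ℓ` is `K`-smooth with `min ℓ = 0`, the imbalance change after one
GD step satisfies `‖D⁺ − D‖_F ≤ 2Kη²(σ_max(W₁)² + σ_max(W₂)²) ℓ(W₁W₂ᵀ)`. -/
theorem stmt12 (n m h : ℕ) (η K : ℝ) (hK : 0 < K)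
    (ℓ : Matrix (Fin n) (Fin m) ℝ → ℝ)
    (g : Matrix (Fin n) (Fin m) ℝ → Matrix (Fin n) (Fin m) ℝ)
    (hsmooth : ∀ U V, ℓ U ≤ ℓ V + ip (g V) (U - V) + K / 2 * fro (U - V) ^ 2)
    (hnonneg : ∀ W, 0 ≤ ℓ W)
    (W₁ : Matrix (Fin n) (Fin h) ℝ) (W₂ : Matrix (Fin m) (Fin h) ℝ)
    (G : Matrix (Fin n) (Fin m) ℝ) (hG : G = g (W₁ * W₂ᵀ))
    (W₁' : Matrix (Fin n) (Fin h) ℝ) (hW₁' : W₁' = W₁ - η • (G * W₂))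
    (W₂' : Matrix (Fin m) (Fin h) ℝ) (hW₂' : W₂' = W₂ - η • (Gᵀ * W₁)) :
    fro ((W₁'ᵀ * W₁' - W₂'ᵀ * W₂') - (W₁ᵀ * W₁ - W₂ᵀ * W₂))
      ≤ 2 * K * η ^ 2 * (smaxSq W₁ + smaxSq W₂) * ℓ (W₁ * W₂ᵀ) := by
  -- the algebraic identity for the imbalance change
  have hid : (W₁'ᵀ * W₁' - W₂'ᵀ * W₂') - (W₁ᵀ * W₁ - W₂ᵀ * W₂)
      = (η ^ 2) • ((G * W₂)ᵀ * (G * W₂) - (Gᵀ * W₁)ᵀ * (Gᵀ * W₁)) := by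
    subst hW₁' hW₂'
    simp only [transpose_sub, transpose_smul, transpose_mul, transpose_transpose,
      Matrix.sub_mul, Matrix.mul_sub, Matrix.smul_mul, Matrix.mul_smul, smul_smul,
      smul_sub, Matrix.mul_assoc, pow_two]
    abel
  rw [hid, fro_smul (η ^ 2) (sq_nonneg η)]
  set C₁ := G * W₂ with hC₁
  set C₂ := Gᵀ * W₁ with hC₂
  have hL := hnonneg (W₁ * W₂ᵀ)
  have hG2 : fro G ^ 2 ≤ 2 * K * ℓ (W₁ * W₂ᵀ) := by
    rw [hG]; exact fro_G_sq_le K hK ℓ g hsmooth hnonneg (W₁ * W₂ᵀ)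
  have h1 : fro (C₁ᵀ * C₁) ≤ fro C₁ ^ 2 := by
    calc fro (C₁ᵀ * C₁) ≤ fro C₁ᵀ * fro C₁ := fro_mul_le _ _
      _ = fro C₁ ^ 2 := by rw [fro_transpose, pow_two]
  have h2 : fro (C₂ᵀ * C₂) ≤ fro C₂ ^ 2 := by
    calc fro (C₂ᵀ * C₂) ≤ fro C₂ᵀ * fro C₂ := fro_mul_le _ _
      _ = fro C₂ ^ 2 := by rw [fro_transpose, pow_two]
  have h3 : fro C₁ ^ 2 ≤ smaxSq W₂ * fro G ^ 2 := fro_mul_right_sq G W₂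
  have h4 : fro C₂ ^ 2 ≤ smaxSq W₁ * fro G ^ 2 := by
    have := fro_mul_right_sq Gᵀ W₁
    rwa [fro_transpose] at this
  have htri : fro (C₁ᵀ * C₁ - C₂ᵀ * C₂) ≤ fro (C₁ᵀ * C₁) + fro (C₂ᵀ * C₂) := fro_sub_le _ _
  have hs1 : 0 ≤ smaxSq W₁ := smaxSq_nonneg W₁
  have hs2 : 0 ≤ smaxSq W₂ := smaxSq_nonneg W₂
  have hfg : 0 ≤ fro G ^ 2 := sq_nonneg _
  nlinarith [sq_nonneg η, mul_le_mul_of_nonneg_left hG2 hs1,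
    mul_le_mul_of_nonneg_left hG2 hs2,
    mul_le_mul_of_nonneg_left htri (sq_nonneg η)]
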